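/- (ESIC criterion) Let ρ be a separable state on ℋ_A⊗ℋ_B, i.e., a finite convex combination ρ = ∑_i p_i σ_i^A⊗σ_i^B of product density matrices. Let {E_j^A}, {E_k^B} be rescaled SIC POVMs (E_j = √(d(d+1)/2)·Π_j) on the two subsystems, and define the correlation matrix P with entries P_{jk} = tr(ρ(E_j^A⊗E_k^B)). Then ‖P‖_tr ≤ 1. -/

import Mathlib

open Matrix BigOperators
open scoped Kronecker ComplexOrder

/-- The positive semidefinite square root of a positive semidefinite matrix
(the definition of `Matrix.PosSemidef.sqrt` in the older Mathlib). -/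
noncomputable def posSemidefSqrt {n 𝕜 : Type*} [Fintype n] [DecidableEq n] [RCLike 𝕜]
    {A : Matrix n n 𝕜} (hA : A.PosSemidef) : Matrix n n 𝕜 :=
  hA.1.eigenvectorUnitary.1 * diagonal ((↑) ∘ (hA.1.eigenvalues · |>.sqrt))
  * (star hA.1.eigenvectorUnitary : Matrix n n 𝕜)

/-- Trace norm (sum of singular values) of a real matrix. -/
noncomputable def traceNorm {m n : Type*} [Fintype m] [Fintype n] [DecidableEq m]
    (M : Matrix m n ℝ) : ℝ :=
  (posSemidefSqrt (Matrix.posSemidef_self_mul_conjTranspose M)).trace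

/-- The SIC overlap condition for a family of `d²` vectors in `ℂ^d`. -/
def IsSIC (d : ℕ) (ψ : Fin (d ^ 2) → Fin d → ℂ) : Prop :=
  ∀ i j, ‖dotProduct (star (ψ i)) (ψ j)‖ ^ 2 =
    ((if i = j then (d : ℝ) else 0) + 1) / ((d : ℝ) + 1)

/-- The SIC POVM element `Π_k = |ψ_k⟩⟨ψ_k| / d`. -/
noncomputable def sicProj (d : ℕ) (ψ : Fin (d ^ 2) → Fin d → ℂ) (k : Fin (d ^ 2)) :
    Matrix (Fin d) (Fin d) ℂ :=
  (d : ℂ)⁻¹ • vecMulVec (ψ k) (star (ψ k))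
lemma trace_sqrt {m : Type*} [Fintype m] [DecidableEq m] {A : Matrix m m ℝ} (hA : A.PosSemidef) :
    (posSemidefSqrt hA).trace = ∑ i, Real.sqrt (hA.1.eigenvalues i) := by
  rw [posSemidefSqrt, trace_mul_cycle]
  rw [show (star hA.1.eigenvectorUnitary.1) * hA.1.eigenvectorUnitary.1 = 1 from
    Unitary.coe_star_mul_self _, one_mul, trace_diagonal]
  simp [Function.comp]


lemma dotProduct_finsum {n ι : Type*} [Fintype n] [Fintype ι] (v : n → ℝ) (f : ι → n → ℝ) :
    v ⬝ᵥ (∑ i, f i) = ∑ i, v ⬝ᵥ f i := by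
  simp only [dotProduct, Finset.sum_apply, Finset.mul_sum]
  exact Finset.sum_comm

lemma finsum_dotProduct {n ι : Type*} [Fintype n] [Fintype ι] (v : n → ℝ) (f : ι → n → ℝ) :
    (∑ i, f i) ⬝ᵥ v = ∑ i, f i ⬝ᵥ v := by
  simp only [dotProduct, Finset.sum_apply, Finset.sum_mul]
  exact Finset.sum_comm

lemma finsum_mulVec {m n ι : Type*} [Fintype n] [Fintype ι] (f : ι → Matrix m n ℝ) (v : n → ℝ) :
    (∑ i, f i) *ᵥ v = ∑ i, (f i *ᵥ v) := by
  ext p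
  simp only [mulVec, dotProduct, Finset.sum_apply, Matrix.sum_apply, Finset.sum_mul]
  exact Finset.sum_comm

lemma vecMulVec_mulVec' {m n : Type*} [Fintype n] (a : m → ℝ) (b : n → ℝ) (v : n → ℝ) :
    vecMulVec a b *ᵥ v = (b ⬝ᵥ v) • a := by
  ext p
  simp only [mulVec, dotProduct, vecMulVec_apply, Pi.smul_apply, smul_eq_mul, Finset.sum_mul]
  exact Finset.sum_congr rfl fun q _ => by ring

lemma traceNorm_sum_outer_le {m n : Type*} [Fintype m] [Fintype n] [DecidableEq m]
    {ι : Type} [Fintype ι] (w : ι → ℝ)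
    (hw : ∀ i, 0 ≤ w i) (hw1 : ∑ i, w i = 1)
    (a : ι → m → ℝ) (b : ι → n → ℝ)
    (ha : ∀ i, a i ⬝ᵥ a i ≤ 1) (hb : ∀ i, b i ⬝ᵥ b i ≤ 1)
    {P : Matrix m n ℝ} (hPeq : P = ∑ i, w i • vecMulVec (a i) (b i)) :
    traceNorm P ≤ 1 := by
  classical
  have hA : (P * Pᴴ).PosSemidef := Matrix.posSemidef_self_mul_conjTranspose P
  set lam : m → ℝ := hA.1.eigenvalues with hlam
  have hlam0 : ∀ i, 0 ≤ lam i := hA.eigenvalues_nonneg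
  set u : m → m → ℝ := fun i => ⇑(hA.1.eigenvectorBasis i) with hu
  have hAu : ∀ i, (P * Pᴴ) *ᵥ u i = lam i • u i := fun i => hA.1.mulVec_eigenvectorBasis i
  have hPH : Pᴴ = Pᵀ := conjTranspose_eq_transpose_of_trivial P
  -- orthonormality of u : star U * U = 1
  have huu : ∀ i j, u i ⬝ᵥ u j = if i = j then 1 else 0 := by
    intro i j
    have h1 := congrFun (congrFun (Unitary.coe_star_mul_self hA.1.eigenvectorUnitary) i) j
    simp only [Matrix.mul_apply, Matrix.one_apply, star_apply, star_trivial,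
      hA.1.eigenvectorUnitary_apply] at h1
    simpa [dotProduct, hu, mul_comm] using h1
  -- Parseval for u
  have hUU' : hA.1.eigenvectorUnitary.1 * (hA.1.eigenvectorUnitary.1)ᵀ = 1 := by
    have h2 := Unitary.coe_mul_star_self hA.1.eigenvectorUnitary
    rw [Unitary.coe_star, Matrix.star_eq_conjTranspose] at h2
    simpa [conjTranspose_eq_transpose_of_trivial] using h2
  have hpars : ∀ c : m → ℝ, ∑ i, (u i ⬝ᵥ c) ^ 2 = c ⬝ᵥ c := by
    intro c
    have hyi : ∀ i, u i ⬝ᵥ c = ((hA.1.eigenvectorUnitary.1)ᵀ *ᵥ c) i := by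
      intro i
      simp [mulVec, dotProduct, transpose_apply, hA.1.eigenvectorUnitary_apply, hu]
    calc ∑ i, (u i ⬝ᵥ c) ^ 2
        = ((hA.1.eigenvectorUnitary.1)ᵀ *ᵥ c) ⬝ᵥ ((hA.1.eigenvectorUnitary.1)ᵀ *ᵥ c) := by
          simp only [pow_two, hyi]; rfl
      _ = c ⬝ᵥ c := by
          rw [mulVec_transpose, ← dotProduct_mulVec, mulVec_vecMul, hUU', one_mulVec]
  have hpvdot : ∀ i j, (Pᵀ *ᵥ u i) ⬝ᵥ (Pᵀ *ᵥ u j) = lam j * (u i ⬝ᵥ u j) := by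
    intro i j
    rw [show Pᵀ *ᵥ u i = u i ᵥ* P from mulVec_transpose _ _, ← dotProduct_mulVec,
      mulVec_mulVec, ← hPH, hAu j, dotProduct_smul, smul_eq_mul]
  set s : m → ℝ := fun i => Real.sqrt (lam i) with hs
  have hs0 : ∀ i, 0 ≤ s i := fun i => Real.sqrt_nonneg _
  have hss : ∀ i, s i * s i = lam i := fun i => Real.mul_self_sqrt (hlam0 i)
  set v : m → n → ℝ := fun i => (s i)⁻¹ • (Pᵀ *ᵥ u i) with hv
  have hvv : ∀ i j, v i ⬝ᵥ v j = if i = j then (if s i = 0 then 0 else 1) else 0 := by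
    intro i j
    have : v i ⬝ᵥ v j = (s i)⁻¹ * ((s j)⁻¹ * (lam j * (u i ⬝ᵥ u j))) := by
      rw [hv]
      simp only [smul_dotProduct, dotProduct_smul, smul_eq_mul, hpvdot]
      ring
    rw [this, huu]
    by_cases hij : i = j
    · subst hij
      by_cases h0 : s i = 0
      · have hl0 : lam i = 0 := by rw [← hss i, h0, mul_zero]
        simp [h0, hl0]
      · rw [if_pos rfl, if_pos rfl, if_neg h0, ← hss i]
        field_simp
    · simp [hij]
  -- Bessel inequality for the family v
  have hvz : ∀ i, s i = 0 → v i = 0 := by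
    intro i h0
    simp [hv, h0]
  have hbes : ∀ c : n → ℝ, ∑ i, (v i ⬝ᵥ c) ^ 2 ≤ c ⬝ᵥ c := by
    intro c
    set t : m → ℝ := fun i => v i ⬝ᵥ c with ht
    have hti : ∀ i, v i ⬝ᵥ c = t i := fun i => rfl
    set S : n → ℝ := ∑ i, t i • v i with hS
    have hnn : 0 ≤ (c - S) ⬝ᵥ (c - S) :=
      Finset.sum_nonneg fun k _ => mul_self_nonneg _
    have hcS : c ⬝ᵥ S = ∑ i, t i ^ 2 := by
      rw [hS, dotProduct_finsum]
      refine Finset.sum_congr rfl fun i _ => ?_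
      rw [dotProduct_smul, smul_eq_mul, dotProduct_comm, hti]
      ring
    have hSc : S ⬝ᵥ c = ∑ i, t i ^ 2 := by
      rw [hS, finsum_dotProduct]
      refine Finset.sum_congr rfl fun i _ => ?_
      rw [smul_dotProduct, smul_eq_mul, hti]
      ring
    have hSS : S ⬝ᵥ S = ∑ i, t i ^ 2 := by
      rw [hS, finsum_dotProduct]
      have : ∀ i, (t i • v i) ⬝ᵥ S = t i ^ 2 := by
        intro i
        rw [hS, smul_dotProduct, dotProduct_finsum]
        by_cases h0 : s i = 0
        · have : t i = 0 := by rw [ht]; simp [hvz i h0]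
          simp [this]
        · have : ∀ j, v i ⬝ᵥ t j • v j = if j = i then t i else 0 := by
            intro j
            rw [dotProduct_smul, smul_eq_mul, hvv]
            by_cases hij : i = j
            · subst hij; simp [h0]
            · simp [hij, Ne.symm hij]
          rw [Finset.sum_congr rfl fun j _ => this j, Finset.sum_ite_eq' _ i]
          simp [pow_two]
      rw [Finset.sum_congr rfl fun i _ => this i]
    have hexp : (c - S) ⬝ᵥ (c - S) = c ⬝ᵥ c - ∑ i, t i ^ 2 := by
      rw [sub_dotProduct, dotProduct_sub, dotProduct_sub, hcS, hSc, hSS]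
      ring
    rw [hexp] at hnn
    linarith
  -- step: s i = u i ⬝ᵥ (P *ᵥ v i)
  have hstep : ∀ i, s i = u i ⬝ᵥ (P *ᵥ v i) := by
    intro i
    by_cases h0 : s i = 0
    · rw [h0, hvz i h0]
      simp
    · have hcount : u i ⬝ᵥ (P *ᵥ ((Pᵀ) *ᵥ u i)) = lam i := by
        rw [mulVec_mulVec, ← hPH, hAu i, dotProduct_smul, smul_eq_mul, huu]
        simp
      rw [hv]
      simp only [mulVec_smul, dotProduct_smul, smul_eq_mul, hcount]
      rw [← hss i]
      field_simp
  -- expand via the separable decomposition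
  have hexpand : ∀ i, u i ⬝ᵥ (P *ᵥ v i) = ∑ α, w α * ((u i ⬝ᵥ a α) * (b α ⬝ᵥ v i)) := by
    intro i
    rw [hPeq, finsum_mulVec, dotProduct_finsum]
    refine Finset.sum_congr rfl fun α _ => ?_
    rw [smul_mulVec, vecMulVec_mulVec', dotProduct_smul, dotProduct_smul,
      smul_eq_mul, smul_eq_mul, dotProduct_smul, smul_eq_mul]
    ring
  -- trace norm as sum of singular values
  have htn : traceNorm P = ∑ i, s i := trace_sqrt hA
  rw [htn]
  have hkey : ∀ α, ∑ i, (u i ⬝ᵥ a α) * (b α ⬝ᵥ v i) ≤ 1 := by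
    intro α
    have hcs := Finset.sum_mul_sq_le_sq_mul_sq Finset.univ (fun i => u i ⬝ᵥ a α)
      (fun i => v i ⬝ᵥ b α)
    have h1 : ∑ i, (u i ⬝ᵥ a α) ^ 2 = a α ⬝ᵥ a α := hpars (a α)
    have h2 : ∑ i, (v i ⬝ᵥ b α) ^ 2 ≤ b α ⬝ᵥ b α := hbes (b α)
    have h2' : (0:ℝ) ≤ ∑ i, (v i ⬝ᵥ b α) ^ 2 :=
      Finset.sum_nonneg fun i _ => sq_nonneg _
    have h1' : (0:ℝ) ≤ ∑ i, (u i ⬝ᵥ a α) ^ 2 :=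
      Finset.sum_nonneg fun i _ => sq_nonneg _
    have hsq : (∑ i, (u i ⬝ᵥ a α) * (v i ⬝ᵥ b α)) ^ 2 ≤ 1 := by
      calc (∑ i, (u i ⬝ᵥ a α) * (v i ⬝ᵥ b α)) ^ 2
          ≤ (∑ i, (u i ⬝ᵥ a α) ^ 2) * (∑ i, (v i ⬝ᵥ b α) ^ 2) := hcs
        _ ≤ 1 * 1 := by
            apply mul_le_mul _ _ h2' (by norm_num)
            · rw [h1]; exact ha α
            · exact le_trans h2 (hb α)
        _ = 1 := by norm_num
    have : ∑ i, (u i ⬝ᵥ a α) * (b α ⬝ᵥ v i) = ∑ i, (u i ⬝ᵥ a α) * (v i ⬝ᵥ b α) := by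
      refine Finset.sum_congr rfl fun i _ => ?_
      rw [dotProduct_comm (b α) (v i)]
    rw [this]
    nlinarith [hsq]
  calc ∑ i, s i = ∑ i, ∑ α, w α * ((u i ⬝ᵥ a α) * (b α ⬝ᵥ v i)) := by
        refine Finset.sum_congr rfl fun i _ => ?_
        rw [hstep i, hexpand i]
    _ = ∑ α, w α * (∑ i, (u i ⬝ᵥ a α) * (b α ⬝ᵥ v i)) := by
        rw [Finset.sum_comm]
        exact Finset.sum_congr rfl fun α _ => by rw [Finset.mul_sum]
    _ ≤ ∑ α, w α * 1 := by
        refine Finset.sum_le_sum fun α _ => ?_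
        exact mul_le_mul_of_nonneg_left (hkey α) (hw α)
    _ = 1 := by simp [hw1]


lemma trace_sq_eq {m : Type*} [Fintype m] [DecidableEq m] {A : Matrix m m ℂ}
    (hA : A.IsHermitian) : (A * A).trace = ((∑ i, (hA.eigenvalues i) ^ 2 : ℝ) : ℂ) := by
  set U : Matrix m m ℂ := hA.eigenvectorUnitary.1 with hU
  set D : Matrix m m ℂ := diagonal (RCLike.ofReal ∘ hA.eigenvalues) with hD
  have huu : star U * U = 1 := Unitary.coe_star_mul_self _
  conv_lhs => rw [hA.spectral_theorem, Unitary.conjStarAlgAut_apply]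
  have h1 : star U * (U * (D * star U)) = D * star U := by
    rw [← mul_assoc, huu, one_mul]
  simp only [mul_assoc]
  rw [h1, trace_mul_comm]
  rw [show D * (D * star U) * U = D * (D * (star U * U)) from by simp only [mul_assoc],
    huu, mul_one, hD, diagonal_mul_diagonal, trace_diagonal]
  push_cast
  simp [Function.comp, pow_two]

lemma trace_eq {m : Type*} [Fintype m] [DecidableEq m] {A : Matrix m m ℂ}
    (hA : A.IsHermitian) : A.trace = ((∑ i, hA.eigenvalues i : ℝ) : ℂ) := by
  conv_lhs => rw [hA.spectral_theorem, Unitary.conjStarAlgAut_apply, trace_mul_cycle]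
  rw [show (star hA.eigenvectorUnitary.1) * hA.eigenvectorUnitary.1 = 1 from
    Unitary.coe_star_mul_self _, one_mul, trace_diagonal]
  push_cast
  simp [Function.comp]

lemma trace_mul_vecMulVec {d : ℕ} (σ : Matrix (Fin d) (Fin d) ℂ) (ψ : Fin d → ℂ) :
    (σ * vecMulVec ψ (star ψ)).trace = star ψ ⬝ᵥ (σ *ᵥ ψ) := by
  simp only [trace, diag_apply, Matrix.mul_apply, vecMulVec_apply, dotProduct, mulVec,
    Pi.star_apply, Finset.mul_sum]
  exact Finset.sum_congr rfl fun p _ => Finset.sum_congr rfl fun q _ => by ring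

lemma trace_vecMulVec_mul_vecMulVec {d : ℕ} (φ ψ : Fin d → ℂ) :
    (vecMulVec φ (star φ) * vecMulVec ψ (star ψ)).trace
      = (star φ ⬝ᵥ ψ) * (star ψ ⬝ᵥ φ) := by
  simp only [trace, diag_apply, Matrix.mul_apply, vecMulVec_apply, dotProduct,
    Pi.star_apply, Finset.sum_mul, Finset.mul_sum]
  exact Finset.sum_congr rfl fun p _ => Finset.sum_congr rfl fun q _ => by ring

lemma sic_bound {d : ℕ} (hd : 0 < d) (ψ : Fin (d ^ 2) → Fin d → ℂ) (hsic : IsSIC d ψ)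
    {σ : Matrix (Fin d) (Fin d) ℂ} (hσ : σ.PosSemidef) (hσ1 : σ.trace = 1)
    (E : Fin (d ^ 2) → Matrix (Fin d) (Fin d) ℂ)
    (hE : ∀ j, E j = (Real.sqrt ((d : ℝ) * ((d : ℝ) + 1) / 2) : ℂ) • sicProj d ψ j) :
    (∀ j, ((σ * E j).trace).im = 0) ∧ ∑ j, ((σ * E j).trace).re ^ 2 ≤ 1 := by
  classical
  set x : Fin (d ^ 2) → Matrix (Fin d) (Fin d) ℂ :=
    fun j => vecMulVec (ψ j) (star (ψ j)) with hx
  set Gc : Fin (d ^ 2) → Fin (d ^ 2) → ℂ :=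
    fun i j => ((if i = j then (d : ℂ) else 0) + 1) / ((d : ℂ) + 1) with hGc
  have hd1 : ((d : ℂ) + 1) ≠ 0 := Nat.cast_add_one_ne_zero d
  -- Gram matrix entries
  have hG : ∀ i j, (x i * x j).trace = Gc i j := by
    intro i j
    rw [hx]
    simp only
    rw [trace_vecMulVec_mul_vecMulVec]
    have hconj : star (ψ j) ⬝ᵥ ψ i = (starRingEnd ℂ) (star (ψ i) ⬝ᵥ ψ j) := by
      simp only [dotProduct, Pi.star_apply, map_sum, _root_.map_mul, Complex.star_def,
        Complex.conj_conj]
      exact Finset.sum_congr rfl fun k _ => mul_comm _ _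
    rw [hconj, Complex.mul_conj, ← Complex.sq_norm, hsic i j, hGc]
    push_cast [apply_ite (Complex.ofReal)]
    ring
  -- each x j has unit trace
  have hrnn : ∀ j, (0:ℝ) ≤ ∑ k, Complex.normSq (ψ j k) :=
    fun j => Finset.sum_nonneg fun k _ => Complex.normSq_nonneg _
  have hz : ∀ j, star (ψ j) ⬝ᵥ ψ j = ((∑ k, Complex.normSq (ψ j k) : ℝ) : ℂ) := by
    intro j
    push_cast
    simp only [dotProduct, Pi.star_apply, Complex.star_def]
    exact Finset.sum_congr rfl fun k _ => (Complex.normSq_eq_conj_mul_self).symm ▸ rfl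
  have hr1 : ∀ j, (∑ k, Complex.normSq (ψ j k) : ℝ) = 1 := by
    intro j
    have h1 := hsic j j
    rw [if_pos rfl, div_self (by positivity : ((d:ℝ)+1) ≠ 0)] at h1
    rw [hz j, Complex.norm_real, Real.norm_eq_abs, abs_of_nonneg (hrnn j)] at h1
    nlinarith [hrnn j]
  have htx : ∀ j, (x j).trace = 1 := by
    intro j
    have h2 : (x j).trace = star (ψ j) ⬝ᵥ ψ j := by
      simp only [hx, trace, diag_apply, vecMulVec_apply, dotProduct, Pi.star_apply]
      exact Finset.sum_congr rfl fun k _ => mul_comm _ _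
    rw [h2, hz j, hr1 j, Complex.ofReal_one]
  -- row sums against a vector
  have hrowsum : ∀ (g : Fin (d ^ 2) → ℂ) (i : Fin (d ^ 2)),
      ∑ j, g j * Gc i j = (((d:ℂ))+1)⁻¹ * ((d:ℂ) * g i + ∑ j, g j) := by
    intro g i
    have hterm : ∀ j, g j * Gc i j
        = ((if i = j then (d:ℂ) * g j else 0) + g j) * ((d:ℂ)+1)⁻¹ := by
      intro j
      rw [hGc]
      simp only
      rw [div_eq_mul_inv]
      split_ifs <;> ring
    rw [Finset.sum_congr rfl fun j _ => hterm j, ← Finset.sum_mul, Finset.sum_add_distrib,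
      Finset.sum_ite_eq]
    simp only [Finset.mem_univ, if_true]
    ring
  -- linear independence of the x's
  have hdc : (d:ℂ) ≠ 0 := by exact_mod_cast hd.ne'
  have hli : LinearIndependent ℂ x := by
    rw [Fintype.linearIndependent_iff]
    intro g hg
    have key : ∀ i, (d:ℂ) * g i + ∑ j, g j = 0 := by
      intro i
      have h0 : (x i * ∑ j, g j • x j).trace = 0 := by rw [hg, mul_zero, trace_zero]
      rw [Finset.mul_sum] at h0
      simp only [Matrix.mul_smul, trace_smul, trace_sum, smul_eq_mul] at h0
      rw [Finset.sum_congr rfl (fun j _ => by rw [hG i j])] at h0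
      rw [hrowsum g i] at h0
      rcases mul_eq_zero.mp h0 with h | h
      · exact absurd h (inv_ne_zero hd1)
      · exact h
    have hS : ∑ j, g j = 0 := by
      have hsum : ∑ i, ((d:ℂ) * g i + ∑ j, g j) = 0 := by
        rw [Finset.sum_congr rfl fun i _ => key i]
        simp
      rw [Finset.sum_add_distrib, ← Finset.mul_sum, Finset.sum_const, Finset.card_univ,
        Fintype.card_fin, nsmul_eq_mul] at hsum
      have : ((d:ℂ) + (d^2 : ℕ)) * (∑ j, g j) = 0 := by push_cast at hsum ⊢; ring_nf; ring_nf at hsum; linear_combination hsum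
      rcases mul_eq_zero.mp this with h | h
      · exfalso
        apply hdc
        have h2 : (d:ℂ) * (1 + (d:ℂ)) = 0 := by push_cast at h; ring_nf; ring_nf at h; linear_combination h
        rcases mul_eq_zero.mp h2 with h3 | h3
        · exact h3
        · exact absurd (by linear_combination h3 : ((d:ℂ)+1) = 0) hd1
      · exact h
    intro i
    have hk := key i
    rw [hS, add_zero] at hk
    exact (mul_eq_zero.mp hk).resolve_left hdc
  -- the x's form a basis
  have hd2pos : 0 < d ^ 2 := by positivity
  haveI : Nonempty (Fin (d ^ 2)) := ⟨⟨0, hd2pos⟩⟩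
  have hcard : Fintype.card (Fin (d ^ 2)) = Module.finrank ℂ (Matrix (Fin d) (Fin d) ℂ) := by
    rw [Module.finrank_matrix]
    simp [pow_two]
  let bas : Module.Basis (Fin (d ^ 2)) ℂ (Matrix (Fin d) (Fin d) ℂ) :=
    basisOfLinearIndependentOfCardEqFinrank hli hcard
  have hbx : ∀ j, bas j = x j := fun j =>
    congrFun (coe_basisOfLinearIndependentOfCardEqFinrank hli hcard) j
  set c : Fin (d ^ 2) → ℂ := fun j => bas.repr σ j with hc
  have hσx : σ = ∑ j, c j • x j := by
    conv_lhs => rw [← bas.sum_repr σ]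
    exact Finset.sum_congr rfl fun j _ => by rw [hbx j]
  -- trace σ = ∑ c
  have hsumc : ∑ j, c j = 1 := by
    have h1 : σ.trace = ∑ j, c j := by
      rw [hσx, trace_sum]
      simp only [trace_smul, smul_eq_mul]
      exact Finset.sum_congr rfl fun j _ => by rw [htx j, mul_one]
    rw [← h1, hσ1]
  -- trace σ² expansion
  have hσσ : (σ * σ).trace = ∑ j, ∑ k, c j * c k * Gc j k := by
    conv_lhs => rw [hσx]
    rw [Finset.sum_mul_sum]
    rw [trace_sum]
    refine Finset.sum_congr rfl fun j _ => ?_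
    rw [trace_sum]
    refine Finset.sum_congr rfl fun k _ => ?_
    rw [Matrix.smul_mul, Matrix.mul_smul, trace_smul, trace_smul, hG j k,
      smul_eq_mul, smul_eq_mul]
    ring
  -- Gram column correlations
  have hsumGG : ∀ j k, ∑ i, Gc j i * Gc k i = (d:ℂ)/((d:ℂ)+1) * (Gc j k + 1) := by
    intro j k
    have hterm : ∀ i, Gc j i * Gc k i
        = (1 + (if j = i then (d:ℂ) else 0) + (if k = i then (d:ℂ) else 0)
           + (if j = i then (d:ℂ) else 0) * (if k = i then (d:ℂ) else 0))
          / (((d:ℂ)+1) * ((d:ℂ)+1)) := by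
      intro i
      rw [hGc]
      simp only
      rw [div_mul_div_comm]
      congr 1
      ring
    have hprod : ∑ i, (if j = i then (d:ℂ) else 0) * (if k = i then (d:ℂ) else 0)
        = if j = k then (d:ℂ) * (d:ℂ) else 0 := by
      by_cases hjk : j = k
      · subst hjk
        rw [if_pos rfl,
          Finset.sum_congr rfl (fun i _ =>
            show _ = if j = i then (d:ℂ)*(d:ℂ) else 0 from by split_ifs <;> ring),
          Finset.sum_ite_eq]
        simp
      · rw [if_neg hjk]
        refine Finset.sum_eq_zero fun i _ => ?_
        split_ifs with h1 h2
        · exact absurd (h1.trans h2.symm) hjk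
        all_goals ring
    rw [Finset.sum_congr rfl fun i _ => hterm i, ← Finset.sum_div,
      Finset.sum_add_distrib, Finset.sum_add_distrib, Finset.sum_add_distrib,
      Finset.sum_const, Finset.card_univ, Fintype.card_fin, Finset.sum_ite_eq,
      Finset.sum_ite_eq, hprod]
    simp only [Finset.mem_univ, if_true, nsmul_eq_mul]
    rw [hGc]
    simp only
    by_cases hjk : j = k
    · rw [if_pos hjk, if_pos hjk]
      field_simp
      push_cast
      ring
    · rw [if_neg hjk, if_neg hjk]
      field_simp
      push_cast
      ring
  -- expansion of t i
  have ht : ∀ i, (σ * x i).trace = ∑ j, c j * Gc j i := by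
    intro i
    conv_lhs => rw [hσx]
    rw [Finset.sum_mul, trace_sum]
    exact Finset.sum_congr rfl fun j _ => by
      rw [Matrix.smul_mul, trace_smul, hG j i, smul_eq_mul]
  -- the key identity
  have hid : ∑ i, (σ * x i).trace * (σ * x i).trace
      = (d:ℂ)/((d:ℂ)+1) * ((σ * σ).trace + 1) := by
    calc ∑ i, (σ * x i).trace * (σ * x i).trace
        = ∑ i, ∑ j, ∑ k, (c j * Gc j i) * (c k * Gc k i) := by
          refine Finset.sum_congr rfl fun i _ => ?_
          rw [ht i, Finset.sum_mul_sum]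
      _ = ∑ j, ∑ k, c j * c k * ∑ i, Gc j i * Gc k i := by
          rw [Finset.sum_comm]
          refine Finset.sum_congr rfl fun j _ => ?_
          rw [Finset.sum_comm]
          refine Finset.sum_congr rfl fun k _ => ?_
          rw [Finset.mul_sum]
          exact Finset.sum_congr rfl fun i _ => by ring
      _ = ∑ j, ∑ k, ((d:ℂ)/((d:ℂ)+1) * (c j * c k * Gc j k)
            + (d:ℂ)/((d:ℂ)+1) * (c j * c k)) := by
          refine Finset.sum_congr rfl fun j _ => Finset.sum_congr rfl fun k _ => ?_
          rw [hsumGG j k]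
          ring
      _ = (d:ℂ)/((d:ℂ)+1) * ((σ * σ).trace + 1) := by
          simp only [Finset.sum_add_distrib, ← Finset.mul_sum]
          rw [← hσσ,
            show (∑ i, c i * ∑ i, c i) = (∑ i, c i) * (∑ i, c i) from
              (Finset.sum_mul _ _ _).symm,
            hsumc, mul_one, mul_add]
  -- positivity / realness of the t i
  have htpos : ∀ i, 0 ≤ (σ * x i).trace := by
    intro i
    have h2 : (σ * x i).trace = star (ψ i) ⬝ᵥ (σ *ᵥ ψ i) := by
      rw [hx]
      exact trace_mul_vecMulVec σ (ψ i)
    rw [h2]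
    exact hσ.dotProduct_mulVec_nonneg (ψ i)
  have htim : ∀ i, ((σ * x i).trace).im = 0 := by
    intro i
    have := (Complex.le_def.mp (htpos i)).2
    simpa using this.symm
  have htre : ∀ i, 0 ≤ ((σ * x i).trace).re := fun i => by
    have := (Complex.le_def.mp (htpos i)).1
    simpa using this
  -- eigenvalue facts for σ
  have hherm : σ.IsHermitian := hσ.1
  have hev0 : ∀ i, 0 ≤ hherm.eigenvalues i := hσ.eigenvalues_nonneg
  have hev1 : ∑ i, hherm.eigenvalues i = 1 := by
    have h2 := trace_eq hherm
    rw [hσ1] at h2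
    exact_mod_cast h2.symm
  have hsum2le : (∑ i, (hherm.eigenvalues i)^2 : ℝ) ≤ 1 := by
    calc (∑ i, (hherm.eigenvalues i)^2 : ℝ)
        ≤ (∑ i, hherm.eigenvalues i)^2 :=
          Finset.sum_sq_le_sq_sum_of_nonneg (fun i _ => hev0 i)
      _ = 1 := by rw [hev1]; norm_num
  -- real part of the identity
  set r2 : ℝ := ∑ i, (hherm.eigenvalues i)^2 with hr2
  have hre : ∑ i, ((σ * x i).trace).re ^ 2 = (d:ℝ)/((d:ℝ)+1) * (r2 + 1) := by
    have h2 := congrArg Complex.re hid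
    rw [trace_sq_eq hherm, ← hr2] at h2
    rw [show (d:ℂ)/((d:ℂ)+1) * ((r2:ℂ) + 1)
        = (((d:ℝ)/((d:ℝ)+1) * (r2 + 1) : ℝ) : ℂ) from by push_cast; ring] at h2
    rw [Complex.ofReal_re, Complex.re_sum] at h2
    rw [← h2]
    refine Finset.sum_congr rfl fun i _ => ?_
    rw [Complex.mul_re, htim i]
    ring
  -- relate E j traces to the t i
  have hEj : ∀ j, (σ * E j).trace
      = ((Real.sqrt ((d:ℝ)*((d:ℝ)+1)/2) / (d:ℝ) : ℝ) : ℂ) * (σ * x j).trace := by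
    intro j
    rw [hE j, show sicProj d ψ j = (d:ℂ)⁻¹ • x j from rfl, smul_smul, Matrix.mul_smul,
      trace_smul, smul_eq_mul]
    push_cast
    ring
  constructor
  · intro j
    rw [hEj j, Complex.im_ofReal_mul, htim j, mul_zero]
  · have hD0 : (0:ℝ) < (d:ℝ) := by exact_mod_cast hd
    have hsq : (Real.sqrt ((d:ℝ)*((d:ℝ)+1)/2))^2 = (d:ℝ)*((d:ℝ)+1)/2 :=
      Real.sq_sqrt (by positivity)
    calc ∑ j, ((σ * E j).trace).re ^ 2
        = (Real.sqrt ((d:ℝ)*((d:ℝ)+1)/2) / (d:ℝ))^2 * ∑ j, ((σ * x j).trace).re ^ 2 := by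
          rw [Finset.mul_sum]
          refine Finset.sum_congr rfl fun j _ => ?_
          rw [hEj j, Complex.re_ofReal_mul, mul_pow]
      _ = ((d:ℝ)*((d:ℝ)+1)/2) / ((d:ℝ)^2) * ((d:ℝ)/((d:ℝ)+1) * (r2 + 1)) := by
          rw [hre, div_pow, hsq]
      _ = (r2 + 1) / 2 := by
          field_simp
      _ ≤ 1 := by linarith [hsum2le]



theorem esic_criterion (dA dB : ℕ) (hdA : 0 < dA) (hdB : 0 < dB)
    (ψA : Fin (dA ^ 2) → Fin dA → ℂ) (hsicA : IsSIC dA ψA)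
    (ψB : Fin (dB ^ 2) → Fin dB → ℂ) (hsicB : IsSIC dB ψB)
    (EA : Fin (dA ^ 2) → Matrix (Fin dA) (Fin dA) ℂ)
    (hEA : ∀ j, EA j = (Real.sqrt ((dA : ℝ) * ((dA : ℝ) + 1) / 2) : ℂ) • sicProj dA ψA j)
    (EB : Fin (dB ^ 2) → Matrix (Fin dB) (Fin dB) ℂ)
    (hEB : ∀ k, EB k = (Real.sqrt ((dB : ℝ) * ((dB : ℝ) + 1) / 2) : ℂ) • sicProj dB ψB k)
    (ρ : Matrix (Fin dA × Fin dB) (Fin dA × Fin dB) ℂ)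
    (ι : Type) [Fintype ι] (w : ι → ℝ) (hw : ∀ i, 0 ≤ w i) (hw1 : ∑ i, w i = 1)
    (σA : ι → Matrix (Fin dA) (Fin dA) ℂ)
    (hσA : ∀ i, (σA i).PosSemidef ∧ (σA i).trace = 1)
    (σB : ι → Matrix (Fin dB) (Fin dB) ℂ)
    (hσB : ∀ i, (σB i).PosSemidef ∧ (σB i).trace = 1)
    (hsep : ρ = ∑ i, (w i : ℂ) • (σA i ⊗ₖ σB i))
    (P : Matrix (Fin (dA ^ 2)) (Fin (dB ^ 2)) ℝ)
    (hP : ∀ j k, P j k = ((ρ * (EA j ⊗ₖ EB k)).trace).re) :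
    traceNorm P ≤ 1 := by
  classical
  set a : ι → Fin (dA ^ 2) → ℝ := fun α j => ((σA α * EA j).trace).re with hadef
  set b : ι → Fin (dB ^ 2) → ℝ := fun α k => ((σB α * EB k).trace).re with hbdef
  have hAf := fun α => sic_bound hdA ψA hsicA (hσA α).1 (hσA α).2 EA hEA
  have hBf := fun α => sic_bound hdB ψB hsicB (hσB α).1 (hσB α).2 EB hEB
  have ha : ∀ α, a α ⬝ᵥ a α ≤ 1 := by
    intro α
    have h := (hAf α).2
    calc a α ⬝ᵥ a α = ∑ j, ((σA α * EA j).trace).re ^ 2 := by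
          simp [hadef, dotProduct, pow_two]
      _ ≤ 1 := h
  have hb : ∀ α, b α ⬝ᵥ b α ≤ 1 := by
    intro α
    have h := (hBf α).2
    calc b α ⬝ᵥ b α = ∑ k, ((σB α * EB k).trace).re ^ 2 := by
          simp [hbdef, dotProduct, pow_two]
      _ ≤ 1 := h
  have hPsum : P = ∑ α, w α • vecMulVec (a α) (b α) := by
    ext j k
    rw [hP j k, hsep, Finset.sum_mul, trace_sum, Complex.re_sum]
    simp only [Matrix.sum_apply, Matrix.smul_apply, vecMulVec_apply, smul_eq_mul]
    refine Finset.sum_congr rfl fun α _ => ?_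
    rw [Matrix.smul_mul, trace_smul, ← mul_kronecker_mul, trace_kronecker, smul_eq_mul,
      Complex.re_ofReal_mul, Complex.mul_re, (hAf α).1 j, (hBf α).1 k]
    ring
  exact traceNorm_sum_outer_le w hw hw1 a b ha hb hPsum
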